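/- For any semi De Morgan algebra, the kernel K = {a'' : a ∈ L}, equipped with ∩, ∪, *, 1 = h(⊤), 0 = h(⊥) defined via h and e, is a De Morgan algebra. -/
import Mathlib


/-- A semi De Morgan algebra: a bounded distributive lattice with a unary
operation `neg` satisfying (S2)-(S5). -/
class SemiDeMorgan (L : Type*) extends DistribLattice L, BoundedOrder L where
  neg : L → L
  neg_bot : neg ⊥ = ⊤
  neg_top : neg ⊤ = ⊥
  neg_sup : ∀ a b : L, neg (a ⊔ b) = neg a ⊓ neg b
  neg_neg_inf : ∀ a b : L, neg (neg (a ⊓ b)) = neg (neg a) ⊓ neg (neg b)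
  neg_neg_neg : ∀ a : L, neg (neg (neg a)) = neg a

namespace SemiDeMorgan

variable {L : Type*} [SemiDeMorgan L]

/-- The kernel `K = {a'' : a ∈ L}`. -/
abbrev Kernel (L : Type*) [SemiDeMorgan L] : Type _ :=
  {x : L // ∃ a : L, x = neg (neg a)}

/-- `h : L → K`, `a ↦ a''`. -/
def h (a : L) : Kernel L := ⟨neg (neg a), a, rfl⟩

/-- `e : K → L`, the natural inclusion. -/
def e (α : Kernel L) : L := α.1

/-- `α ∩ β := h (e α ∧ e β)` -/
def kcap (α β : Kernel L) : Kernel L := h (e α ⊓ e β)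

/-- `α ∪ β := h ((e α ∨ e β)'')` -/
def kcup (α β : Kernel L) : Kernel L := h (neg (neg (e α ⊔ e β)))

/-- `α* := h ((e α)')` -/
def kstar (α : Kernel L) : Kernel L := h (neg (e α))

/-- `1 := h ⊤` -/
def kone : Kernel L := h (⊤ : L)

/-- `0 := h ⊥` -/
def kzero : Kernel L := h (⊥ : L)

lemma neg_le_neg' {a b : L} (hab : a ≤ b) : neg b ≤ neg a := by
  have h := neg_sup a b
  rw [sup_eq_right.mpr hab] at h
  rw [h]; exact inf_le_left

lemma e_nn (α : Kernel L) : neg (neg (e α)) = e α := by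
  obtain ⟨x, a, rfl⟩ := α
  exact neg_neg_neg (neg a)

lemma kext {α β : Kernel L} (hab : e α = e β) : α = β := Subtype.ext hab

lemma e_h (a : L) : e (h a) = neg (neg a) := rfl

lemma kcap_val (α β : Kernel L) : e (kcap α β) = e α ⊓ e β := by
  show neg (neg (e α ⊓ e β)) = _
  rw [neg_neg_inf, e_nn, e_nn]

lemma kcup_val (α β : Kernel L) : e (kcup α β) = neg (neg (e α ⊔ e β)) :=
  neg_neg_neg (neg (e α ⊔ e β))

lemma kstar_val (α : Kernel L) : e (kstar α) = neg (e α) := by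
  show neg (neg (neg (e α))) = _
  rw [neg_neg_neg]

lemma kone_val : e (kone : Kernel L) = ⊤ := by
  show neg (neg ⊤) = ⊤
  rw [neg_top, neg_bot]

lemma kzero_val : e (kzero : Kernel L) = ⊥ := by
  show neg (neg ⊥) = ⊥
  rw [neg_bot, neg_top]

lemma neg_nnsup_left (x y : L) : neg (neg (neg x) ⊔ y) = neg (x ⊔ y) := by
  rw [neg_sup, neg_neg_neg, ← neg_sup]

lemma neg_nnsup_right (x y : L) : neg (x ⊔ neg (neg y)) = neg (x ⊔ y) := by
  rw [neg_sup, neg_neg_neg, ← neg_sup]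

/-- The kernel of a semi De Morgan algebra, equipped with `∩, ∪, *, 1, 0`,
is a De Morgan algebra: it is a bounded distributive lattice and `*` is an
involution satisfying the De Morgan laws. -/
theorem kernel_isDeMorgan :
    (∀ α β : Kernel L, kcap α β = kcap β α) ∧
    (∀ α β : Kernel L, kcup α β = kcup β α) ∧
    (∀ α β γ : Kernel L, kcap (kcap α β) γ = kcap α (kcap β γ)) ∧
    (∀ α β γ : Kernel L, kcup (kcup α β) γ = kcup α (kcup β γ)) ∧
    (∀ α β : Kernel L, kcap α (kcup α β) = α) ∧
    (∀ α β : Kernel L, kcup α (kcap α β) = α) ∧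
    (∀ α β γ : Kernel L, kcap α (kcup β γ) = kcup (kcap α β) (kcap α γ)) ∧
    (∀ α : Kernel L, kcap α kone = α) ∧
    (∀ α : Kernel L, kcup α kzero = α) ∧
    (∀ α : Kernel L, kcap α kzero = kzero) ∧
    (∀ α : Kernel L, kcup α kone = kone) ∧
    kstar (kzero : Kernel L) = kone ∧
    kstar (kone : Kernel L) = kzero ∧
    (∀ α β : Kernel L, kstar (kcup α β) = kcap (kstar α) (kstar β)) ∧
    (∀ α β : Kernel L, kstar (kcap α β) = kcup (kstar α) (kstar β)) ∧
    (∀ α : Kernel L, kstar (kstar α) = α) := by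
  refine ⟨?_, ?_, ?_, ?_, ?_, ?_, ?_, ?_, ?_, ?_, ?_, ?_, ?_, ?_, ?_, ?_⟩
  · intro α β; exact kext (by rw [kcap_val, kcap_val, inf_comm])
  · intro α β; exact kext (by rw [kcup_val, kcup_val, sup_comm])
  · intro α β γ; exact kext (by rw [kcap_val, kcap_val, kcap_val, kcap_val, inf_assoc])
  · intro α β γ
    refine kext ?_
    rw [kcup_val, kcup_val, kcup_val, kcup_val]
    congr 1
    rw [neg_nnsup_left, neg_nnsup_right, sup_assoc]
  · intro α β
    refine kext ?_
    rw [kcap_val, kcup_val]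
    refine inf_eq_left.mpr ?_
    calc e α = neg (neg (e α)) := (e_nn α).symm
      _ ≤ neg (neg (e α ⊔ e β)) := neg_le_neg' (neg_le_neg' le_sup_left)
  · intro α β
    refine kext ?_
    rw [kcup_val, kcap_val, sup_inf_self, e_nn]
  · intro α β γ
    refine kext ?_
    rw [kcap_val, kcup_val, kcup_val, kcap_val, kcap_val, ← inf_sup_left,
      neg_neg_inf, e_nn]
  · intro α; exact kext (by rw [kcap_val, kone_val, inf_top_eq])
  · intro α; exact kext (by rw [kcup_val, kzero_val, sup_bot_eq, e_nn])
  · intro α; exact kext (by rw [kcap_val, kzero_val, inf_bot_eq])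
  · intro α; exact kext (by rw [kcup_val, kone_val, sup_top_eq, neg_top, neg_bot])
  · exact kext (by rw [kstar_val, kzero_val, kone_val, neg_bot])
  · exact kext (by rw [kstar_val, kone_val, kzero_val, neg_top])
  · intro α β
    refine kext ?_
    rw [kstar_val, kcup_val, kcap_val, kstar_val, kstar_val, neg_neg_neg, neg_sup]
  · intro α β
    refine kext ?_
    rw [kstar_val, kcap_val, kcup_val, kstar_val, kstar_val, neg_sup, e_nn, e_nn]
  · intro α
    exact kext (by rw [kstar_val, kstar_val, e_nn])

end SemiDeMorgan
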